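/- Symmetry of MBVC constraints: with a^{ij} = (p̄ⁱ - p̄ʲ)/‖p̄ⁱ - p̄ʲ‖₂ and b^{ij} = (a^{ij})ᵀ(p̄ⁱ + p̄ʲ)/2 + r'/2, and analogously a^{ji} = -a^{ij}, b^{ji} = (a^{ji})ᵀ(p̄ⁱ + p̄ʲ)/2 + r'/2, if points pⁱ, pʲ satisfy (a^{ij})ᵀ pⁱ ≥ b^{ij} and (a^{ji})ᵀ pʲ ≥ b^{ji}, then ‖pⁱ - pʲ‖₂ ≥ r'. -/
import Mathlib


open RealInnerProductSpace

theorem mbvc_symmetric_constraints (d : ℕ)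
    (pbar_i pbar_j : EuclideanSpace ℝ (Fin d)) (hne : pbar_i ≠ pbar_j)
    (r' : ℝ) (hr' : 0 < r')
    (aij aji : EuclideanSpace ℝ (Fin d)) (bij bji : ℝ)
    (haij : aij = ‖pbar_i - pbar_j‖⁻¹ • (pbar_i - pbar_j))
    (haji : aji = -aij)
    (hbij : bij = ⟪aij, (1 / 2 : ℝ) • (pbar_i + pbar_j)⟫ + r' / 2)
    (hbji : bji = ⟪aji, (1 / 2 : ℝ) • (pbar_i + pbar_j)⟫ + r' / 2)
    (p_i p_j : EuclideanSpace ℝ (Fin d))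
    (hi : ⟪aij, p_i⟫ ≥ bij) (hj : ⟪aji, p_j⟫ ≥ bji) :
    ‖p_i - p_j‖ ≥ r' := by
  have hnz : pbar_i - pbar_j ≠ 0 := sub_ne_zero.mpr hne
  have hnorm : ‖aij‖ = 1 := by
    rw [haij, norm_smul, norm_inv, norm_norm,
      inv_mul_cancel₀ (norm_ne_zero_iff.mpr hnz)]
  have hj' : ⟪aij, p_j⟫ ≤ ⟪aij, (1 / 2 : ℝ) • (pbar_i + pbar_j)⟫ - r' / 2 := by
    rw [hbji, haji, inner_neg_left, inner_neg_left] at hj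
    linarith
  have hkey : r' ≤ ⟪aij, p_i - p_j⟫ := by
    rw [inner_sub_right]
    rw [hbij] at hi
    linarith
  calc r' ≤ ⟪aij, p_i - p_j⟫ := hkey
    _ ≤ ‖aij‖ * ‖p_i - p_j‖ := real_inner_le_norm _ _
    _ = ‖p_i - p_j‖ := by rw [hnorm, one_mul]
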